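/- arXiv:1402.0402 — 2 statements merged into one kernel-verified Lean document; each statement's English description precedes it below -/
import Mathlib

section
/- Let G be connected and let S be a minimum balanced separator of G. Then for every contraction order π, the contraction hierarchy G*π contains a clique on at least |S| vertices. -/
open SimpleGraph
open scoped ENNReal

variable {V : Type*}

/-- One step of vertex contraction: remove `v` from the current graph and add an edge
between every pair of its current neighbors. -/
def chStep (H : SimpleGraph V) (v : V) : SimpleGraph V where
  Adj a b := a ≠ b ∧ a ≠ v ∧ b ≠ v ∧ (H.Adj a b ∨ (H.Adj v a ∧ H.Adj v b))
  symm := by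
    constructor
    rintro a b ⟨h1, h2, h3, h4⟩
    refine ⟨h1.symm, h3, h2, ?_⟩
    rcases h4 with h | ⟨ha, hb⟩
    · exact Or.inl h.symm
    · exact Or.inr ⟨hb, ha⟩
  loopless := ⟨fun a h => h.1 rfl⟩

/-- All edges ever present while contracting the vertices of the list in order:
the edges of the initial graph together with all added shortcuts. -/
def chList : SimpleGraph V → List V → SimpleGraph V
  | H, [] => H
  | H, v :: l => H ⊔ chList (chStep H v) l

/-- The rank of a vertex with respect to the contraction order `π`. -/
def rk {n : ℕ} (π : Fin n ≃ V) (v : V) : ℕ := (π.symm v : ℕ)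

/-- The contraction hierarchy `G*π`: contract `π 0, π 1, …` in this order and collect
all original edges and all added shortcuts. -/
def chGraph {n : ℕ} (G : SimpleGraph V) (π : Fin n ≃ V) : SimpleGraph V :=
  chList G ((List.finRange n).map ⇑π)

/-- A list of vertices is up-down w.r.t. a rank function: ranks strictly increase
along a prefix and strictly decrease along the remaining suffix, the two parts
meeting at the maximum-rank vertex. -/
def IsUpDown (r : V → ℕ) (l : List V) : Prop :=
  ∃ l₁ x l₂, l = l₁ ++ x :: l₂ ∧
    List.Chain' (fun a b => r a < r b) (l₁ ++ [x]) ∧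
    List.Chain' (fun a b => r b < r a) (x :: l₂)

/-- Reachability in the upward directed graph `G^∧π` (edges of `G*π` directed from
lower to higher rank): the vertex set of the search space `SS v`. -/
def UpReach {n : ℕ} (G : SimpleGraph V) (π : Fin n ≃ V) (v u : V) : Prop :=
  Relation.ReflTransGen (fun a b => (chGraph G π).Adj a b ∧ rk π a < rk π b) v u

/-- Length of a walk: the sum of the weights of its edges. -/
noncomputable def wlen {H : SimpleGraph V} (m : V → V → ℝ≥0∞) {s t : V}
    (p : H.Walk s t) : ℝ≥0∞ :=
  (p.darts.map (fun d => m d.toProd.1 d.toProd.2)).sum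

/-- Shortest path distance in a graph `H` under edge weights `m`. -/
noncomputable def gdist (H : SimpleGraph V) (m : V → V → ℝ≥0∞) (s t : V) : ℝ≥0∞ :=
  ⨅ (p : H.Walk s t), wlen m p

/-- Minimum length of an up-down `s`-`t` path in `G*π`. -/
noncomputable def updist {n : ℕ} (G : SimpleGraph V) (π : Fin n ≃ V)
    (m : V → V → ℝ≥0∞) (s t : V) : ℝ≥0∞ :=
  ⨅ (p : (chGraph G π).Walk s t) (_ : IsUpDown (rk π) p.support), wlen m p

/-- Minimum length of a strictly rank-increasing `u`-`v` path in `G*π`. -/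
noncomputable def upOnlyDist {n : ℕ} (G : SimpleGraph V) (π : Fin n ≃ V)
    (m : V → V → ℝ≥0∞) (u v : V) : ℝ≥0∞ :=
  ⨅ (p : (chGraph G π).Walk u v)
    (_ : List.Chain' (fun a b => rk π a < rk π b) p.support), wlen m p

/-- `S` is a balanced separator of the subgraph of `G` induced by `U`. -/
def IsBalancedSepOn [DecidableEq V] (G : SimpleGraph V) (U S : Finset V) : Prop :=
  S ⊆ U ∧ ∃ A B : Finset V, A ⊆ U ∧ B ⊆ U ∧
    Disjoint A B ∧ Disjoint A S ∧ Disjoint B S ∧ A ∪ B ∪ S = U ∧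
    (∀ a ∈ A, ∀ b ∈ B, ¬ G.Adj a b) ∧
    3 * A.card ≤ 2 * U.card ∧ 3 * B.card ≤ 2 * U.card

/-- Nested dissection orders (as lists, earliest contracted first, separator last)
of induced subgraphs of `G`, in which the separator chosen at every recursion step on
a `k`-vertex subgraph is balanced and has cardinality at most `c * k ^ α`. -/
inductive IsNDOrder [DecidableEq V] (G : SimpleGraph V) (c α : ℝ) : Finset V → List V → Prop
  | empty : IsNDOrder G c α ∅ []
  | step {U S A B : Finset V} {lA lB lS : List V} :
      Disjoint A B → Disjoint A S → Disjoint B S → A ∪ B ∪ S = U →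
      (∀ a ∈ A, ∀ b ∈ B, ¬ G.Adj a b) →
      3 * A.card ≤ 2 * U.card → 3 * B.card ≤ 2 * U.card →
      ((S.card : ℝ) ≤ c * (U.card : ℝ) ^ α) →
      lS.Nodup → lS.toFinset = S →
      IsNDOrder G c α A lA → IsNDOrder G c α B lB →
      IsNDOrder G c α U (lA ++ lB ++ lS)

/-- Number of vertices of the search space `SS v` in `G^∧π`. -/
noncomputable def nVertsSS {n : ℕ} (G : SimpleGraph V) (π : Fin n ≃ V) (v : V) : ℕ :=
  {u | UpReach G π v u}.ncard

/-- Number of arcs of the search space `SS v` in `G^∧π`: arcs of `G^∧π` with both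
endpoints reachable from `v`. -/
noncomputable def nArcsSS {n : ℕ} (G : SimpleGraph V) (π : Fin n ≃ V) (v : V) : ℕ :=
  {q : V × V | (chGraph G π).Adj q.1 q.2 ∧ rk π q.1 < rk π q.2 ∧
    UpReach G π v q.1 ∧ UpReach G π v q.2}.ncard

/-- The rank sequence of a walk: for each edge, the minimum of the ranks of its
endpoints, sorted in decreasing order. -/
def rankSeq {H : SimpleGraph V} (r : V → ℕ) {s t : V} (p : H.Walk s t) : List ℕ :=
  (p.darts.map (fun d => min (r d.toProd.1) (r d.toProd.2))).insertionSort (· ≥ ·)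

/-- Directed length of a walk in `G*π` under a pair of directed metrics `(mu, md)`:
each edge traversed from lower rank to higher rank costs its upward weight,
each edge traversed from higher rank to lower rank costs its downward weight. -/
noncomputable def dlen {H : SimpleGraph V} (r : V → ℕ) (mu md : V → V → ℝ≥0∞)
    {s t : V} (p : H.Walk s t) : ℝ≥0∞ :=
  (p.darts.map (fun d =>
    if r d.toProd.1 < r d.toProd.2 then mu d.toProd.1 d.toProd.2
    else md d.toProd.2 d.toProd.1)).sum

/-- Length of a directed walk `s :: l` under arc weights `wD`. -/
noncomputable def dWalkLen (wD : V → V → ℝ≥0∞) : V → List V → ℝ≥0∞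
  | _, [] => 0
  | s, x :: l => wD s x + dWalkLen wD x l

/-- Shortest directed path distance in the directed graph `D` under arc weights `wD`. -/
noncomputable def ddist (D : V → V → Prop) (wD : V → V → ℝ≥0∞) (s t : V) : ℝ≥0∞ :=
  ⨅ (l : List V) (_ : List.Chain D s l ∧ l.getLastD s = t), dWalkLen wD s l

/-! ### Auxiliary development for `stmt1` -/

section Aux

lemma chStep_adj {H : SimpleGraph V} {v a b : V} :
    (chStep H v).Adj a b ↔ a ≠ b ∧ a ≠ v ∧ b ≠ v ∧ (H.Adj a b ∨ (H.Adj v a ∧ H.Adj v b)) :=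
  Iff.rfl

lemma chain_cons' {R : V → V → Prop} {a b : V} {l : List V} :
    List.Chain R a (b :: l) ↔ R a b ∧ List.Chain R b l := List.isChain_cons_cons

lemma chain_split' {R : V → V → Prop} {a b : V} {l₁ l₂ : List V} :
    List.Chain R a (l₁ ++ b :: l₂) ↔ List.Chain R a (l₁ ++ [b]) ∧ List.Chain R b l₂ :=
  @List.isChain_split _ R b (a :: l₁) l₂

/-- current graph after eliminating the vertices in `p` -/
def curG (G : SimpleGraph V) (p : List V) : SimpleGraph V := p.foldl chStep G

@[simp] lemma curG_nil (G : SimpleGraph V) : curG G [] = G := rfl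
@[simp] lemma curG_cons (G : SimpleGraph V) (x : V) (p : List V) :
    curG G (x :: p) = curG (chStep G x) p := rfl
lemma curG_append (G : SimpleGraph V) (p q : List V) :
    curG G (p ++ q) = curG (curG G p) q := List.foldl_append

lemma chStep_adj_of_adj {G : SimpleGraph V} {a b x : V} (h : G.Adj a b)
    (ha : a ≠ x) (hb : b ≠ x) : (chStep G x).Adj a b :=
  chStep_adj.2 ⟨h.ne, ha, hb, Or.inl h⟩

lemma curG_adj_of_adj {G : SimpleGraph V} {a b : V} (p : List V) (h : G.Adj a b)
    (ha : a ∉ p) (hb : b ∉ p) : (curG G p).Adj a b := by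
  induction p generalizing G with
  | nil => exact h
  | cons x p ih =>
      simp only [List.mem_cons, not_or] at ha hb
      exact ih (chStep_adj_of_adj h ha.1 hb.1) ha.2 hb.2

lemma G_le_chList (G : SimpleGraph V) (l : List V) : G ≤ chList G l := by
  cases l with
  | nil => exact le_rfl
  | cons x l => exact le_sup_left

lemma chList_adj_of_curG_adj {G : SimpleGraph V} {a b : V} (p q : List V)
    (h : (curG G p).Adj a b) : (chList G (p ++ q)).Adj a b := by
  induction p generalizing G with
  | nil => exact G_le_chList G q h
  | cons x p ih =>
      simpa only [List.cons_append, chList, SimpleGraph.sup_adj] using Or.inr (ih h)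

lemma exists_prefix_of_chList_adj {G : SimpleGraph V} {a b : V} {l : List V}
    (h : (chList G l).Adj a b) : ∃ p q, l = p ++ q ∧ (curG G p).Adj a b := by
  induction l generalizing G with
  | nil => exact ⟨[], [], rfl, h⟩
  | cons x l ih =>
      rcases h with h | h
      · exact ⟨[], x :: l, rfl, h⟩
      · obtain ⟨p, q, rfl, hc⟩ := ih h
        exact ⟨x :: p, q, rfl, hc⟩

lemma isolated_chStep {G : SimpleGraph V} {v : V} (x : V)
    (h : ∀ b, ¬ G.Adj v b) : ∀ b, ¬ (chStep G x).Adj v b := by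
  intro b hb
  obtain ⟨-, -, -, hadj | ⟨h1, -⟩⟩ := chStep_adj.1 hb
  · exact h b hadj
  · exact h x h1.symm

lemma isolated_chStep_self (G : SimpleGraph V) (v : V) :
    ∀ b, ¬ (chStep G v).Adj v b := by
  intro b hb; obtain ⟨-, hv, -, -⟩ := chStep_adj.1 hb; exact hv rfl

lemma isolated_curG {G : SimpleGraph V} {v : V} (p : List V)
    (h : ∀ b, ¬ G.Adj v b) : ∀ b, ¬ (curG G p).Adj v b := by
  induction p generalizing G with
  | nil => exact h
  | cons x p ih => exact ih (isolated_chStep x h)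

/-- lifting a chain through one contraction step -/
lemma chain_chStep {G : SimpleGraph V} {x : V} {X : Set V} {t : V} (htX : t ∉ X) (htx : t ≠ x) :
    ∀ (N : ℕ) (l : List V), l.length ≤ N → ∀ (s : V) (l' : List V),
    List.Chain G.Adj s l → l = l' ++ [t] →
    (∀ u ∈ l', u = x ∨ u ∈ X) → s ≠ x → s ≠ t →
    ∃ m' : List V, List.Chain (chStep G x).Adj s (m' ++ [t]) ∧ ∀ u ∈ m', u ∈ X := by
  intro N
  induction N with
  | zero =>
      intro l hlen s l' _ hl _ _ _
      subst hl; simp at hlen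
  | succ N IH =>
  intro l hlen s l' hchain hl hl' hsx hst
  match l, l' with
  | _, [] =>
      simp only [List.nil_append] at hl
      subst hl
      rw [chain_cons'] at hchain
      exact ⟨[], by simpa using chain_cons'.2 ⟨chStep_adj_of_adj hchain.1 hsx htx, List.Chain.nil⟩, by simp⟩
  | _, (y :: l'') =>
      simp only [List.cons_append] at hl
      subst hl
      simp only [List.length_cons, Nat.succ_le_succ_iff] at hlen
      rw [chain_cons'] at hchain
      obtain ⟨hsy, hchain⟩ := hchain
      by_cases hyx : y = x
      · -- y = x : next vertex exists since l'' ++ [t] nonempty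
        rw [hyx] at hsy hchain
        match l'', hchain with
        | [], hchain =>
            simp only [List.nil_append, chain_cons'] at hchain
            refine ⟨[], ?_, by simp⟩
            simp only [List.nil_append, chain_cons']
            exact ⟨chStep_adj.2 ⟨hst, hsx, htx, Or.inr ⟨hsy.symm, hchain.1⟩⟩, List.Chain.nil⟩
        | (z :: l''2), hchain =>
            -- l = x :: (z :: l''2) ++ [t], chain x ((z::l''2)++[t])
            simp only [List.cons_append, chain_cons'] at hchain
            obtain ⟨hxz, hchain⟩ := hchain
            have hzx : z ≠ x := (G.ne_of_adj hxz).symm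
            have hzX : z ∈ X := (hl' z (by simp)).resolve_left hzx
            have hzt : z ≠ t := fun h => htX (h ▸ hzX)
            by_cases hzs : z = s
            · -- drop the detour s - x - s
              rw [hzs] at hchain
              exact IH (l''2 ++ [t]) (by simp at hlen ⊢; omega) s l''2 hchain rfl
                (fun u hu => hl' u (by simp [hu])) hsx hst
            · obtain ⟨m', hm, hmX⟩ := IH (l''2 ++ [t]) (by simp at hlen ⊢; omega) z l''2
                hchain rfl (fun u hu => hl' u (by simp [hu])) hzx hzt
              refine ⟨z :: m', chain_cons'.2 ⟨chStep_adj.2 ⟨Ne.symm hzs, hsx, hzx,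
                Or.inr ⟨hsy.symm, hxz⟩⟩, hm⟩, ?_⟩
              intro u hu
              rcases List.mem_cons.1 hu with h | h
              · exact h ▸ hzX
              · exact hmX u h
      · -- y ≠ x, y ∈ X
        have hyX : y ∈ X := ((hl' y (by simp)).resolve_left hyx)
        have hyt : y ≠ t := fun h => htX (h ▸ hyX)
        obtain ⟨m', hm, hmX⟩ := IH (l'' ++ [t]) hlen y l'' hchain rfl
          (fun u hu => hl' u (by simp [hu])) hyx hyt
        exact ⟨y :: m', chain_cons'.2 ⟨chStep_adj_of_adj hsy hsx hyx, hm⟩,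
          fun u hu => (List.mem_cons.1 hu).elim (fun h => h ▸ hyX) (hmX u)⟩

lemma curG_adj_of_chain : ∀ (p : List V) (G : SimpleGraph V) (s t : V) (l' : List V),
    List.Chain G.Adj s (l' ++ [t]) → (∀ u ∈ l', u ∈ p) → s ∉ p → t ∉ p → s ≠ t →
    (curG G p).Adj s t := by
  intro p
  induction p with
  | nil =>
      intro G s t l' hchain hl' _ _ _
      have : l' = [] := by
        cases l' with
        | nil => rfl
        | cons a l'' => exact absurd (hl' a (by simp)) (by simp)
      subst this
      rw [List.nil_append, chain_cons'] at hchain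
      exact hchain.1
  | cons x p ih =>
      intro G s t l' hchain hl' hs ht hst
      have hsx : s ≠ x := fun h => hs (h ▸ (List.mem_cons_self : x ∈ x :: p))
      have htx : t ≠ x := fun h => ht (h ▸ (List.mem_cons_self : x ∈ x :: p))
      have htX : t ∉ {u : V | u ∈ p} := fun h => ht (List.mem_cons_of_mem x h)
      obtain ⟨m', hm, hmX⟩ := chain_chStep (G := G) (x := x) (X := {u : V | u ∈ p})
        htX htx (l' ++ [t]).length (l' ++ [t]) le_rfl s l' hchain rfl
        (fun u hu => by
          rcases List.mem_cons.1 (hl' u hu) with h | h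
          · exact Or.inl h
          · exact Or.inr h) hsx hst
      exact ih (chStep G x) s t m' hm (fun u hu => hmX u hu)
        (fun h => hs (List.mem_cons_of_mem x h)) (fun h => ht (List.mem_cons_of_mem x h)) hst

lemma rk_pi {n : ℕ} (π : Fin n ≃ V) (i : Fin n) : rk π (π i) = i := by simp [rk]
lemma rk_lt {n : ℕ} (π : Fin n ≃ V) (v : V) : rk π v < n := (π.symm v).isLt
lemma rk_inj {n : ℕ} (π : Fin n ≃ V) {u v : V} (h : rk π u = rk π v) : u = v := by
  have : π.symm u = π.symm v := Fin.ext h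
  simpa using congrArg π this

section OrdL
variable {n : ℕ} (π : Fin n ≃ V)

/-- the contraction order as a list -/
def ordL : List V := (List.finRange n).map ⇑π

@[simp] lemma length_ordL : (ordL π).length = n := by simp [ordL]
lemma ordL_getElem (i : ℕ) (h : i < n) : (ordL π)[i]'(by simpa using h) = π ⟨i, h⟩ := by
  simp [ordL]
lemma mem_take_ordL {u : V} {k : ℕ} (h : u ∈ (ordL π).take k) : rk π u < k := by
  obtain ⟨i, hi, hu⟩ := List.mem_take_iff_getElem.1 h
  have hin : i < n := lt_of_lt_of_le hi (by simp)
  rw [ordL_getElem π i hin] at hu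
  have : rk π u = i := by rw [← hu, rk_pi]
  omega
lemma take_mem_ordL {u : V} {k : ℕ} (h : rk π u < k) : u ∈ (ordL π).take k := by
  refine List.mem_take_iff_getElem.2 ⟨rk π u, by simp [lt_min_iff, h, rk_lt π u], ?_⟩
  rw [ordL_getElem π _ (rk_lt π u)]
  have : π.symm u = ⟨rk π u, rk_lt π u⟩ := Fin.ext rfl
  rw [← this, Equiv.apply_symm_apply]
lemma ordL_decomp (v : V) :
    ordL π = (ordL π).take (rk π v) ++ v :: (ordL π).drop (rk π v + 1) := by
  have h : rk π v < (ordL π).length := by simpa using rk_lt π v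
  have := List.drop_eq_getElem_cons h
  rw [ordL_getElem π _ (rk_lt π v)] at this
  have hv : π ⟨rk π v, rk_lt π v⟩ = v := by
    have : π.symm v = ⟨rk π v, rk_lt π v⟩ := Fin.ext rfl
    rw [← this, Equiv.apply_symm_apply]
  rw [hv] at this
  rw [← this, List.take_append_drop]

lemma chGraph_eq (G : SimpleGraph V) : chGraph G π = chList G (ordL π) := rfl

lemma G_le_chGraph (G : SimpleGraph V) : G ≤ chGraph G π :=
  G_le_chList G (ordL π)

/-- an edge of the hierarchy incident to `v` going up is present in the current
graph right before `v` is eliminated -/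
lemma curG_take_adj {G : SimpleGraph V} {v a : V}
    (h : (chGraph G π).Adj v a) (hr : rk π v < rk π a) :
    (curG G ((ordL π).take (rk π v))).Adj v a := by
  obtain ⟨p, q, hpq, hadj⟩ := exists_prefix_of_chList_adj h
  have hpq' : ordL π = p ++ q := hpq
  have hdec := ordL_decomp π v
  have hprefP : (ordL π).take (rk π v) <+: ordL π := List.take_prefix _ _
  have hprefp : p <+: ordL π := ⟨q, hpq'.symm⟩
  have hvP : v ∉ (ordL π).take (rk π v) := fun hmem => lt_irrefl _ (mem_take_ordL π hmem)
  have haP : a ∉ (ordL π).take (rk π v) := fun hmem => by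
    have := mem_take_ordL π hmem; omega
  rcases List.prefix_or_prefix_of_prefix hprefp hprefP with ⟨r, hr'⟩ | ⟨r, hr'⟩
  · -- p ++ r = take
    rw [← hr', curG_append]
    refine curG_adj_of_adj r hadj ?_ ?_
    · exact fun hm => hvP (hr' ▸ List.mem_append_right p hm)
    · exact fun hm => haP (hr' ▸ List.mem_append_right p hm)
  · -- take ++ r = p
    have h1 : ordL π = (ordL π).take (rk π v) ++ (r ++ q) := by
      rw [← List.append_assoc, hr', hpq']
    have h2 : r ++ q = v :: (ordL π).drop (rk π v + 1) :=
      List.append_cancel_left (h1.symm.trans hdec)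
    cases r with
    | nil =>
        rw [List.append_nil] at hr'
        rw [hr']
        exact hadj
    | cons z r' =>
        exfalso
        have hz : z = v := by
          have := congrArg (fun l => l.head?) h2
          simpa using this
        rw [hz] at hr'
        have heq : curG G p = curG (chStep (curG G ((ordL π).take (rk π v))) v) r' := by
          rw [← hr', curG_append, curG_cons]
        rw [heq] at hadj
        exact isolated_curG r' (isolated_chStep_self _ v) a hadj

end OrdL
end Aux

section Aux2
variable {n : ℕ} (π : Fin n ≃ V) (G : SimpleGraph V)

lemma chGraph_clique_step {v a b : V}
    (ha : (chGraph G π).Adj v a) (hb : (chGraph G π).Adj v b)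
    (hra : rk π v < rk π a) (hrb : rk π v < rk π b) (hab : a ≠ b) :
    (chGraph G π).Adj a b := by
  have hKa := curG_take_adj π ha hra
  have hKb := curG_take_adj π hb hrb
  have hav : a ≠ v := fun h => by rw [h] at hra; omega
  have hbv : b ≠ v := fun h => by rw [h] at hrb; omega
  have hstep : (curG G ((ordL π).take (rk π v) ++ [v])).Adj a b := by
    rw [curG_append]
    exact chStep_adj.2 ⟨hab, hav, hbv, Or.inr ⟨hKa, hKb⟩⟩
  have hdec : ordL π = ((ordL π).take (rk π v) ++ [v]) ++ (ordL π).drop (rk π v + 1) := by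
    rw [List.append_assoc, List.singleton_append]
    exact ordL_decomp π v
  show (chList G (ordL π)).Adj a b
  rw [hdec]
  exact chList_adj_of_curG_adj _ _ hstep

/-- fill-in: a path through strictly lower-rank vertices yields an edge of the hierarchy -/
lemma chGraph_adj_of_chain {v w : V} {l' : List V}
    (hchain : List.Chain G.Adj v (l' ++ [w]))
    (hl' : ∀ u ∈ l', rk π u < rk π v) (hvw : rk π v < rk π w) :
    (chGraph G π).Adj v w := by
  have hvw' : v ≠ w := fun h => by rw [h] at hvw; omega
  have hcur := curG_adj_of_chain ((ordL π).take (rk π v)) G v w l' hchain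
    (fun u hu => take_mem_ordL π (hl' u hu))
    (fun hm => lt_irrefl _ (mem_take_ordL π hm))
    (fun hm => by have := mem_take_ordL π hm; omega) hvw'
  show (chList G (ordL π)).Adj v w
  rw [ordL_decomp π v]
  exact chList_adj_of_curG_adj _ _ hcur

/-- the component of `v` in the subgraph induced on vertices of rank at most `rk π v` -/
def RvSet (v : V) : Set V :=
  {w | Relation.ReflTransGen (fun a b => G.Adj a b ∧ rk π b < rk π v) v w}

lemma self_mem_RvSet (v : V) : v ∈ RvSet π G v := Relation.ReflTransGen.refl

lemma rank_of_mem_RvSet {v w : V} (h : w ∈ RvSet π G v) : w = v ∨ rk π w < rk π v := by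
  induction h with
  | refl => exact Or.inl rfl
  | tail _ hstep _ => exact Or.inr hstep.2

lemma rank_le_of_mem_RvSet {v w : V} (h : w ∈ RvSet π G v) : rk π w ≤ rk π v := by
  rcases rank_of_mem_RvSet π G h with h | h
  · rw [h]
  · omega

lemma RvSet_closure {v u w : V} (hu : u ∈ RvSet π G v) (hadj : G.Adj u w)
    (hw : rk π w ≤ rk π v) : w ∈ RvSet π G v := by
  by_cases hwv : w = v
  · rw [hwv]; exact self_mem_RvSet π G v
  · have : rk π w < rk π v := lt_of_le_of_ne hw (fun h => hwv (rk_inj π h))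
    exact Relation.ReflTransGen.tail hu ⟨hadj, this⟩

lemma RvSet_subset {v w : V} (hw : w ∈ RvSet π G v) : RvSet π G w ⊆ RvSet π G v := by
  rcases rank_of_mem_RvSet π G hw with h | h
  · rw [h]
  · intro z hz
    refine hw.trans (Relation.ReflTransGen.mono ?_ _ _ hz)
    rintro a b ⟨hadj, hb⟩
    exact ⟨hadj, by omega⟩

lemma rtg_reverse {r r' : V → V → Prop} (h : ∀ a b, r a b → r' b a) {a b : V}
    (hab : Relation.ReflTransGen r a b) : Relation.ReflTransGen r' b a := by
  induction hab with
  | refl => exact Relation.ReflTransGen.refl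
  | tail _ hstep ih => exact Relation.ReflTransGen.head (h _ _ hstep) ih

lemma RvSet_reverse {v z : V} (hz : z ∈ RvSet π G v) :
    Relation.ReflTransGen (fun a b => G.Adj a b ∧ rk π b ≤ rk π v) z v := by
  induction hz with
  | refl => exact Relation.ReflTransGen.refl
  | tail hprev hstep ih =>
      exact Relation.ReflTransGen.head
        ⟨hstep.1.symm, rank_le_of_mem_RvSet π G hprev⟩ ih

lemma mem_RvSet_of_inter {u u' z : V} (hu : z ∈ RvSet π G u) (hu' : z ∈ RvSet π G u')
    (hr : rk π u < rk π u') : u ∈ RvSet π G u' := by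
  refine hu'.trans (Relation.ReflTransGen.mono ?_ _ _ (RvSet_reverse π G hu))
  rintro a b ⟨hadj, hb⟩
  exact ⟨hadj, by omega⟩

end Aux2

section Aux3
variable {n : ℕ} (π : Fin n ≃ V) (G : SimpleGraph V)

lemma chain_snoc {R : V → V → Prop} {s c d : V} {l : List V}
    (h : List.Chain R s (l ++ [c])) (hcd : R c d) :
    List.Chain R s ((l ++ [c]) ++ [d]) := by
  rw [List.append_assoc, List.singleton_append, chain_split']
  exact ⟨h, chain_cons'.2 ⟨hcd, List.Chain.nil⟩⟩

lemma exists_chain_RvSet {v x : V} (hx : x ∈ RvSet π G v) (hxv : x ≠ v) :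
    ∃ l', List.Chain G.Adj v (l' ++ [x]) ∧ ∀ u ∈ l', rk π u < rk π v := by
  induction hx with
  | refl => exact absurd rfl hxv
  | @tail b c hprev hstep ih =>
      by_cases hbv : b = v
      · rw [hbv] at hstep
        exact ⟨[], by simpa using chain_cons'.2 ⟨hstep.1, List.Chain.nil⟩, by simp⟩
      · obtain ⟨l', hchain, hl'⟩ := ih hbv
        refine ⟨l' ++ [b], chain_snoc hchain hstep.1, ?_⟩
        intro u hu
        rcases List.mem_append.1 hu with h | h
        · exact hl' u h
        · rcases List.mem_singleton.1 h with rfl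
          rcases rank_of_mem_RvSet π G hprev with h | h
          · exact absurd h hbv
          · exact h

lemma chGraph_adj_up {v x w : V} (hx : x ∈ RvSet π G v) (hadj : G.Adj x w)
    (hw : rk π v < rk π w) : (chGraph G π).Adj v w := by
  by_cases hxv : x = v
  · exact G_le_chGraph π G (hxv ▸ hadj)
  · obtain ⟨l', hchain, hl'⟩ := exists_chain_RvSet π G hx hxv
    refine chGraph_adj_of_chain π G (chain_snoc hchain hadj) ?_ hw
    intro u hu
    rcases List.mem_append.1 hu with h | h
    · exact hl' u h
    · rcases List.mem_singleton.1 h with rfl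
      rcases rank_of_mem_RvSet π G hx with h | h
      · exact absurd h hxv
      · exact h

lemma RvSet_univ (hG : G.Connected) {v : V} (h : ∀ w, rk π w ≤ rk π v) (w : V) :
    w ∈ RvSet π G v := by
  have hr : Relation.ReflTransGen G.Adj v w :=
    (SimpleGraph.reachable_iff_reflTransGen v w).1 (hG.preconnected v w)
  induction hr with
  | refl => exact self_mem_RvSet π G v
  | tail hprev hstep ih => exact RvSet_closure π G ih hstep (h _)

/-- greedy packing of small parts -/
lemma pack_lemma {ι : Type*} [DecidableEq ι] {m T : ℕ} (hm : 0 < m) :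
    ∀ (s : Finset ι) (f : ι → ℕ), (∀ i ∈ s, 3 * f i ≤ m) → T ≤ 3 * ∑ i ∈ s, f i →
    ∃ s' ⊆ s, T ≤ 3 * ∑ i ∈ s', f i ∧ 3 * ∑ i ∈ s', f i < T + m := by
  intro s
  induction s using Finset.induction_on with
  | empty =>
      intro f _ hT
      simp only [Finset.sum_empty, Nat.mul_zero, Nat.le_zero] at hT
      exact ⟨∅, Finset.Subset.refl _, by simp [hT], by simp [hT]; omega⟩
  | @insert a s ha ih =>
      intro f hf hT
      by_cases h : T ≤ 3 * ∑ i ∈ s, f i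
      · obtain ⟨s', hs', h1, h2⟩ := ih f (fun i hi => hf i (Finset.mem_insert_of_mem hi)) h
        exact ⟨s', hs'.trans (Finset.subset_insert a s), h1, h2⟩
      · refine ⟨insert a s, Finset.Subset.refl _, ?_, ?_⟩
        · rw [Finset.sum_insert ha] at hT ⊢
          exact hT
        · rw [Finset.sum_insert ha]
          have hfa := hf a (Finset.mem_insert_self a s)
          omega

end Aux3

/-- If `S` is a minimum balanced separator of the connected graph `G`,
then for every contraction order `π` the contraction hierarchy `G*π` contains a
clique on at least `|S|` vertices. -/
theorem stmt1 {V : Type*} [Fintype V] [DecidableEq V] {n : ℕ}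
    (G : SimpleGraph V) (hG : G.Connected) (π : Fin n ≃ V)
    (S : Finset V) (hS : IsBalancedSepOn G Finset.univ S)
    (hmin : ∀ S' : Finset V, IsBalancedSepOn G Finset.univ S' → S.card ≤ S'.card) :
    ∃ C : Finset V, S.card ≤ C.card ∧ (chGraph G π).IsClique (C : Set V) := by
  classical
  have hcard : Fintype.card V = n := by
    simpa using (Fintype.card_congr π).symm
  have hn : 0 < n := by
    have : Nonempty V := hG.nonempty
    rw [← hcard]
    exact Fintype.card_pos
  set Rfin : V → Finset V := fun v => Finset.univ.filter (fun w => w ∈ RvSet π G v)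
    with hRfin
  have hmemRfin : ∀ v w : V, w ∈ Rfin v ↔ w ∈ RvSet π G v := by
    intro v w; rw [hRfin]; simp
  -- the minimum-rank vertex with a big low component
  have hM0ne : (Finset.univ.filter (fun v => n < 3 * (Rfin v).card)).Nonempty := by
    refine ⟨π ⟨n - 1, by omega⟩, Finset.mem_filter.2 ⟨Finset.mem_univ _, ?_⟩⟩
    have hall : ∀ w, w ∈ RvSet π G (π ⟨n - 1, by omega⟩) := by
      refine RvSet_univ π G hG (fun w => ?_)
      rw [rk_pi]
      have := rk_lt π w
      simp only []
      omega
    have heq : Rfin (π ⟨n - 1, by omega⟩) = Finset.univ := by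
      refine Finset.eq_univ_of_forall (fun w => ?_)
      rw [hmemRfin]
      exact hall w
    rw [heq, Finset.card_univ, hcard]
    omega
  obtain ⟨v0, hv0mem, hv0min⟩ := Finset.exists_min_image _ (rk π) hM0ne
  have hbig : n < 3 * (Rfin v0).card := (Finset.mem_filter.1 hv0mem).2
  have hsmall : ∀ u, rk π u < rk π v0 → 3 * (Rfin u).card ≤ n := by
    intro u hu
    by_contra h
    push_neg at h
    have := hv0min u (Finset.mem_filter.2 ⟨Finset.mem_univ _, h⟩)
    omega
  set N : Finset V := Finset.univ.filter
    (fun w => (chGraph G π).Adj v0 w ∧ rk π v0 < rk π w) with hNdef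
  have hmemN : ∀ w, w ∈ N ↔ (chGraph G π).Adj v0 w ∧ rk π v0 < rk π w := by
    intro w; rw [hNdef]; simp
  set C : Finset V := insert v0 N with hCdef
  have hv0C : v0 ∈ C := Finset.mem_insert_self _ _
  have hCcard : 1 ≤ C.card := Finset.card_pos.2 ⟨v0, hv0C⟩
  set W : Finset V := (Rfin v0).erase v0 with hWdef
  have hWmem : ∀ u ∈ W, u ∈ RvSet π G v0 ∧ rk π u < rk π v0 := by
    intro u hu
    have h1 := (hmemRfin v0 u).1 (Finset.mem_of_mem_erase hu)
    have h2 := Finset.ne_of_mem_erase hu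
    rcases rank_of_mem_RvSet π G h1 with h | h
    · exact absurd h h2
    · exact ⟨h1, h⟩
  have hmemW : ∀ u, u ∈ RvSet π G v0 → rk π u < rk π v0 → u ∈ W := by
    intro u h1 h2
    refine Finset.mem_erase.2 ⟨fun h => by rw [h] at h2; omega, (hmemRfin v0 u).2 h1⟩
  set M : Finset V := W.filter (fun u => ∀ u' ∈ W, u ∈ RvSet π G u' → rk π u' ≤ rk π u)
    with hMdef
  have hMW : M ⊆ W := Finset.filter_subset _ _
  have hMprop : ∀ u ∈ M, ∀ u' ∈ W, u ∈ RvSet π G u' → rk π u' ≤ rk π u := by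
    intro u hu
    exact (Finset.mem_filter.1 hu).2
  have hpieceW : ∀ u ∈ M, ∀ z ∈ RvSet π G u, z ∈ W := by
    intro u hu z hz
    have huW := hMW hu
    have h1 := (hWmem u huW).1
    have h2 := (hWmem u huW).2
    refine hmemW z (RvSet_subset π G h1 hz) ?_
    have := rank_le_of_mem_RvSet π G hz
    omega
  have hcover : ∀ w ∈ W, ∃ u ∈ M, w ∈ RvSet π G u := by
    intro w hw
    have hTne : (W.filter (fun u => w ∈ RvSet π G u)).Nonempty :=
      ⟨w, Finset.mem_filter.2 ⟨hw, self_mem_RvSet π G w⟩⟩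
    obtain ⟨u, huT, hmax⟩ := Finset.exists_max_image _ (rk π) hTne
    have huW := (Finset.mem_filter.1 huT).1
    have hwu := (Finset.mem_filter.1 huT).2
    refine ⟨u, Finset.mem_filter.2 ⟨huW, ?_⟩, hwu⟩
    intro u' hu'W huu'
    exact hmax u' (Finset.mem_filter.2 ⟨hu'W, RvSet_subset π G huu' hwu⟩)
  have hdisj : ∀ u ∈ M, ∀ u' ∈ M, u ≠ u' → Disjoint (Rfin u) (Rfin u') := by
    have key : ∀ u ∈ M, ∀ u' ∈ M, rk π u < rk π u' → Disjoint (Rfin u) (Rfin u') := by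
      intro u hu u' hu' hlt
      rw [Finset.disjoint_left]
      intro z hz hz'
      have h1 := (hmemRfin u z).1 hz
      have h2 := (hmemRfin u' z).1 hz'
      have : u ∈ RvSet π G u' := mem_RvSet_of_inter π G h1 h2 hlt
      have := hMprop u hu u' (hMW hu') this
      omega
    intro u hu u' hu' hne
    rcases lt_trichotomy (rk π u) (rk π u') with h | h | h
    · exact key u hu u' hu' h
    · exact absurd (rk_inj π h) hne
    · exact (key u' hu' u hu h).symm
  have hWbiUnion : W = M.biUnion (fun u => Rfin u) := by
    ext z
    rw [Finset.mem_biUnion]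
    constructor
    · intro hz
      obtain ⟨u, hu, hzu⟩ := hcover z hz
      exact ⟨u, hu, (hmemRfin u z).2 hzu⟩
    · rintro ⟨u, hu, hzu⟩
      exact hpieceW u hu z ((hmemRfin u z).1 hzu)
  have hWcard : W.card = ∑ u ∈ M, (Rfin u).card := by
    rw [hWbiUnion]
    exact Finset.card_biUnion hdisj
  have hv0Rfin : v0 ∈ Rfin v0 := (hmemRfin v0 v0).2 (self_mem_RvSet π G v0)
  have hRv0card : (Rfin v0).card = W.card + 1 := by
    rw [hWdef, Finset.card_erase_of_mem hv0Rfin]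
    have : 1 ≤ (Rfin v0).card := Finset.card_pos.2 ⟨v0, hv0Rfin⟩
    omega
  have hT : n - 3 * C.card ≤ 3 * ∑ u ∈ M, (Rfin u).card := by
    rw [← hWcard]
    omega
  obtain ⟨M', hM'sub, hL, hU⟩ := pack_lemma hn M (fun u => (Rfin u).card)
    (fun u hu => hsmall u (hWmem u (hMW hu)).2) hT
  set A : Finset V := M'.biUnion (fun u => Rfin u) with hAdef
  have hAcard : A.card = ∑ u ∈ M', (Rfin u).card := by
    refine Finset.card_biUnion ?_
    intro u hu u' hu' hne
    exact hdisj u (hM'sub hu) u' (hM'sub hu') hne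
  set B : Finset V := Finset.univ \ (A ∪ C) with hBdef
  have hAW : A ⊆ W := by
    intro z hz
    obtain ⟨u, hu, hzu⟩ := Finset.mem_biUnion.1 hz
    exact hpieceW u (hM'sub hu) z ((hmemRfin u z).1 hzu)
  have hWC : Disjoint W C := by
    rw [Finset.disjoint_left]
    intro u hu huC
    have h2 := (hWmem u hu).2
    rcases Finset.mem_insert.1 huC with h | h
    · rw [h] at h2; omega
    · have := ((hmemN u).1 h).2; omega
  have hAC : Disjoint A C := Finset.disjoint_of_subset_left hAW hWC
  have hAB : Disjoint A B := by
    rw [hBdef, Finset.disjoint_left]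
    intro z hz hzB
    exact (Finset.mem_sdiff.1 hzB).2 (Finset.mem_union_left _ hz)
  have hBC : Disjoint B C := by
    rw [hBdef, Finset.disjoint_left]
    intro z hz hzC
    exact (Finset.mem_sdiff.1 hz).2 (Finset.mem_union_right _ hzC)
  have hunion : A ∪ B ∪ C = Finset.univ := by
    ext z
    simp only [Finset.mem_union, hBdef, Finset.mem_sdiff, Finset.mem_univ, true_and,
      Finset.mem_union, true_iff]
    tauto
  -- cardinalities
  have hcards : A.card + B.card + C.card = n := by
    have h1 : (A ∪ C) ∪ B = Finset.univ := by
      rw [← hunion]; ext z; simp only [Finset.mem_union]; tauto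
    have h2 : Disjoint (A ∪ C) B := by
      rw [Finset.disjoint_union_left]
      exact ⟨hAB, hBC.symm⟩
    have h3 := Finset.card_union_of_disjoint h2
    rw [h1, Finset.card_univ, hcard, Finset.card_union_of_disjoint hAC] at h3
    omega
  -- no edges between A and B
  have hnoedge : ∀ a ∈ A, ∀ b ∈ B, ¬ G.Adj a b := by
    intro a ha b hb hadj
    obtain ⟨u, huM', hau⟩ := Finset.mem_biUnion.1 ha
    have hau : a ∈ RvSet π G u := (hmemRfin u a).1 hau
    have huM : u ∈ M := hM'sub huM'
    have hbB := Finset.mem_sdiff.1 hb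
    have hbA : b ∉ A := fun h => hbB.2 (Finset.mem_union_left _ h)
    have hbC : b ∉ C := fun h => hbB.2 (Finset.mem_union_right _ h)
    have haRv0 : a ∈ RvSet π G v0 :=
      RvSet_subset π G (hWmem u (hMW huM)).1 hau
    rcases le_or_gt (rk π b) (rk π v0) with hble | hbgt
    · have hbRv0 : b ∈ RvSet π G v0 := RvSet_closure π G haRv0 hadj hble
      have hbv0 : b ≠ v0 := fun h => hbC (h ▸ hv0C)
      have hbW : b ∈ W := by
        refine hmemW b hbRv0 ?_
        rcases rank_of_mem_RvSet π G hbRv0 with h | h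
        · exact absurd h hbv0
        · exact h
      rcases le_or_gt (rk π b) (rk π u) with h1 | h1
      · have : b ∈ RvSet π G u := RvSet_closure π G hau hadj h1
        exact hbA (Finset.mem_biUnion.2 ⟨u, huM', (hmemRfin u b).2 this⟩)
      · have haRb : a ∈ RvSet π G b := by
          refine Relation.ReflTransGen.tail Relation.ReflTransGen.refl
            ⟨hadj.symm, ?_⟩
          have := rank_le_of_mem_RvSet π G hau
          omega
        have : u ∈ RvSet π G b := mem_RvSet_of_inter π G hau haRb h1
        have := hMprop u huM b hbW this
        omega
    · have : (chGraph G π).Adj v0 b := chGraph_adj_up π G haRv0 hadj hbgt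
      exact hbC (Finset.mem_insert.2 (Or.inr ((hmemN b).2 ⟨this, hbgt⟩)))
  -- C is a balanced separator
  have hsep : IsBalancedSepOn G Finset.univ C := by
    refine ⟨Finset.subset_univ _, A, B, Finset.subset_univ _, Finset.subset_univ _,
      hAB, hAC, hBC, hunion, hnoedge, ?_, ?_⟩
    · rw [Finset.card_univ, hcard, hAcard]
      omega
    · rw [Finset.card_univ, hcard]
      have h1 : n ≤ 3 * A.card + 3 * C.card := by rw [hAcard]; omega
      omega
  refine ⟨C, hmin C hsep, ?_⟩
  -- C is a clique in the contraction hierarchy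
  intro x hx y hy hxy
  rw [Finset.coe_insert, Set.mem_insert_iff] at hx hy
  rcases hx with rfl | hx
  · rcases hy with rfl | hy
    · exact absurd rfl hxy
    · exact ((hmemN y).1 hy).1
  · rcases hy with rfl | hy
    · exact (((hmemN x).1 hx).1).symm
    · have h1 := (hmemN x).1 hx
      have h2 := (hmemN y).1 hy
      exact chGraph_clique_step π G h1.1 h2.1 h1.2 h2.2 hxy
end

section
/- Let α ∈ (0,1) and c > 0 be such that every subgraph of G on k vertices (for every k ≥ 1) has a balanced separator of cardinality at most c·k^α. Let π be a nested dissection order of G in which the separator chosen at every recursion step on a k-vertex subgraph has cardinality at most c·k^α. Then for every vertex v, the search space SS(v) in G^∧π contains at most (c/(1−(2/3)^α))·n^α vertices. -/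
open SimpleGraph
open scoped ENNReal

variable {V : Type*}

/-! ### Auxiliary development for `stmt3` -/

namespace CHAux

variable {V : Type*}

/-- The graph remaining after contracting the vertices of `l` in order. -/
def chRun : SimpleGraph V → List V → SimpleGraph V
  | H, [] => H
  | H, v :: l => chRun (chStep H v) l

lemma le_chList (H : SimpleGraph V) (l : List V) : H ≤ chList H l := by
  induction l generalizing H with
  | nil => exact le_rfl
  | cons v l ih => exact le_sup_left

lemma chRun_append (H : SimpleGraph V) (l₁ l₂ : List V) :
    chRun H (l₁ ++ l₂) = chRun (chRun H l₁) l₂ := by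
  induction l₁ generalizing H with
  | nil => rfl
  | cons v l ih => simp [chRun, ih]

lemma chList_append (H : SimpleGraph V) (l₁ l₂ : List V) :
    chList H (l₁ ++ l₂) = chList H l₁ ⊔ chList (chRun H l₁) l₂ := by
  induction l₁ generalizing H with
  | nil =>
    simp only [List.nil_append, chList, chRun]
    exact (sup_of_le_right (le_chList H l₂)).symm
  | cons v l ih =>
    show H ⊔ chList (chStep H v) (l ++ l₂) = (H ⊔ chList (chStep H v) l) ⊔ _
    rw [ih, sup_assoc]
    rfl

lemma isolated_chStep {H : SimpleGraph V} {a : V} (h : ∀ b, ¬ H.Adj a b) (v b : V) :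
    ¬ (chStep H v).Adj a b := by
  rintro ⟨h1, h2, h3, h4 | ⟨h5, h6⟩⟩
  · exact h b h4
  · exact h v h5.symm

lemma isolated_chRun {H : SimpleGraph V} {a : V} (h : ∀ b, ¬ H.Adj a b) (l : List V) :
    ∀ b, ¬ (chRun H l).Adj a b := by
  induction l generalizing H with
  | nil => exact h
  | cons v l ih => exact ih (isolated_chStep h v)

lemma chRun_isolated_of_mem {l : List V} {a : V} (ha : a ∈ l) (H : SimpleGraph V) :
    ∀ b, ¬ (chRun H l).Adj a b := by
  induction l generalizing H with
  | nil => cases ha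
  | cons v l ih =>
    rcases List.mem_cons.mp ha with rfl | ha
    · refine isolated_chRun (fun b h => ?_) l
      exact (show a ≠ b ∧ a ≠ a ∧ b ≠ a ∧ (H.Adj a b ∨ (H.Adj a a ∧ H.Adj a b)) from h).2.1 rfl
    · exact ih ha (chStep H v)

lemma chRun_adj_of_notMem {l : List V} {a b : V}
    (ha : a ∉ l) (hb : b ∉ l) {H : SimpleGraph V} (h : H.Adj a b) :
    (chRun H l).Adj a b := by
  induction l generalizing H with
  | nil => exact h
  | cons v l ih =>
    simp only [List.mem_cons, not_or] at ha hb
    exact ih ha.2 hb.2 ⟨h.ne, ha.1, hb.1, Or.inl h⟩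

section withDec
variable [DecidableEq V]

/-- Contracting a list of vertices of `S`, when all edges leaving `S` go to `W`,
only ever creates edges inside `S ∪ W`. -/
lemma phaseS {S W : Finset V} :
    ∀ (l : List V) (H : SimpleGraph V),
    (∀ v ∈ l, v ∈ S) →
    (∀ a b, H.Adj a b → a ∈ S → b ∈ S ∪ W) →
    (∀ a b, (chList H l).Adj a b → H.Adj a b ∨ (a ∈ S ∪ W ∧ b ∈ S ∪ W)) ∧
    (∀ a b, (chRun H l).Adj a b → H.Adj a b ∨ (a ∈ S ∪ W ∧ b ∈ S ∪ W)) := by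
  intro l
  induction l with
  | nil => exact fun H _ _ => ⟨fun a b h => Or.inl h, fun a b h => Or.inl h⟩
  | cons v l ih =>
    intro H hl hH
    have hv : v ∈ S := hl v List.mem_cons_self
    have hstep : ∀ a b, (chStep H v).Adj a b → H.Adj a b ∨ (a ∈ S ∪ W ∧ b ∈ S ∪ W) := by
      rintro a b ⟨-, -, -, h | ⟨hh1, hh2⟩⟩
      · exact Or.inl h
      · exact Or.inr ⟨hH v a hh1 hv, hH v b hh2 hv⟩
    have hH' : ∀ a b, (chStep H v).Adj a b → a ∈ S → b ∈ S ∪ W := by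
      intro a b h ha
      rcases hstep a b h with h | h
      · exact hH a b h ha
      · exact h.2
    obtain ⟨ih1, ih2⟩ := ih (chStep H v) (fun x hx => hl x (List.mem_cons_of_mem _ hx)) hH'
    refine ⟨?_, ?_⟩
    · intro a b h
      rcases (by simpa only [chList, SimpleGraph.sup_adj] using h :
          H.Adj a b ∨ (chList (chStep H v) l).Adj a b) with h | h
      · exact Or.inl h
      · rcases ih1 a b h with h | h
        · exact hstep a b h
        · exact Or.inr h
    · intro a b h
      rcases ih2 a b (by simpa only [chRun] using h) with h | h
      · exact hstep a b h
      · exact Or.inr h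

end withDec

lemma key_q_pos {α : ℝ} : 0 < (2/3 : ℝ) ^ α := Real.rpow_pos_of_pos (by norm_num) α

lemma key_q_lt_one {α : ℝ} (hα0 : 0 < α) : (2/3 : ℝ) ^ α < 1 :=
  Real.rpow_lt_one (by norm_num) (by norm_num) hα0

lemma key_ineq {c α k m : ℝ} (hc : 0 < c) (hα0 : 0 < α) (hk : 0 ≤ k) (hm : 0 ≤ m)
    (h : 3 * m ≤ 2 * k) :
    c * k ^ α + c / (1 - (2/3 : ℝ) ^ α) * m ^ α ≤ c / (1 - (2/3 : ℝ) ^ α) * k ^ α := by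
  set q := (2/3 : ℝ) ^ α with hq
  have hq0 : 0 < q := key_q_pos
  have hq1 : q < 1 := key_q_lt_one hα0
  have h1q : 0 < 1 - q := by linarith
  have hm' : m ≤ 2/3 * k := by linarith
  have h2 : m ^ α ≤ (2/3 * k) ^ α := Real.rpow_le_rpow hm hm' hα0.le
  have h3 : (2/3 * k) ^ α = q * k ^ α := by
    rw [hq, Real.mul_rpow (by norm_num) hk]
  have h4 : c / (1 - q) * m ^ α ≤ c / (1 - q) * (q * k ^ α) := by
    apply mul_le_mul_of_nonneg_left (h3 ▸ h2) (by positivity)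
  have h1q' : 1 - q ≠ 0 := ne_of_gt h1q
  have h5 : c * k ^ α + c / (1 - q) * (q * k ^ α) = c / (1 - q) * k ^ α := by
    field_simp
    ring
  linarith

lemma key_ineq2 {c α k : ℝ} (hc : 0 < c) (hα0 : 0 < α) (hk : 0 ≤ k) :
    c * k ^ α ≤ c / (1 - (2/3 : ℝ) ^ α) * k ^ α := by
  set q := (2/3 : ℝ) ^ α with hq
  have hq0 : 0 < q := key_q_pos
  have hq1 : q < 1 := key_q_lt_one hα0
  have h1q : 0 < 1 - q := by linarith
  have hcc : c ≤ c / (1 - q) := by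
    rw [le_div_iff₀ h1q]
    nlinarith
  exact mul_le_mul_of_nonneg_right hcc (Real.rpow_nonneg hk α)

section good
variable [DecidableEq V]

/-- Abstract nested-dissection compatibility of a graph `M` with rank function `r`:
edges of `M` incident to a region stay in the region or its ancestor separators. -/
inductive Good (c α : ℝ) (M : SimpleGraph V) (r : V → ℕ) : Finset V → Finset V → Prop
  | empty (W : Finset V) : Good c α M r ∅ W
  | step {U S A B W : Finset V} :
      A ∪ B ∪ S = U →
      3 * A.card ≤ 2 * U.card → 3 * B.card ≤ 2 * U.card →
      ((S.card : ℝ) ≤ c * (U.card : ℝ) ^ α) →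
      (∀ a b, M.Adj a b → a ∈ U → b ∈ U ∪ W) →
      (∀ x, (x ∈ A ∨ x ∈ B) → ∀ s ∈ S, r x < r s) →
      Good c α M r A (S ∪ W) → Good c α M r B (S ∪ W) →
      Good c α M r U W

lemma good_bound {c α : ℝ} (hc : 0 < c) (hα0 : 0 < α)
    {M : SimpleGraph V} {r : V → ℕ} {U W : Finset V}
    (hg : Good c α M r U W) :
    ∀ v ∈ U, ∃ T : Finset V, v ∈ T ∧
      (∀ u ∈ T, ∀ w, M.Adj u w → r u < r w → w ∈ T ∪ W) ∧
      ((T.card : ℝ) ≤ c / (1 - (2/3 : ℝ) ^ α) * (U.card : ℝ) ^ α) := by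
  induction hg with
  | empty W => exact fun v hv => absurd hv (Finset.notMem_empty v)
  | @step U S A B W hABS h3A h3B hScard hedge hrank gA gB ihA ihB =>
    intro v hv
    have hSU : S ⊆ U := hABS ▸ Finset.subset_union_right
    have hSclosed : ∀ u ∈ S, ∀ w, M.Adj u w → r u < r w → w ∈ S ∪ W := by
      intro u hu w hadj hr
      have hw := hedge u w hadj (hSU hu)
      rcases Finset.mem_union.mp hw with hwU | hwW
      · rw [← hABS] at hwU
        rcases Finset.mem_union.mp hwU with hwAB | hwS
        · rcases Finset.mem_union.mp hwAB with hwA | hwB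
          · exact absurd hr (lt_asymm (hrank w (Or.inl hwA) u hu))
          · exact absurd hr (lt_asymm (hrank w (Or.inr hwB) u hu))
        · exact Finset.mem_union_left _ hwS
      · exact Finset.mem_union_right _ hwW
    rw [← hABS] at hv
    rcases Finset.mem_union.mp hv with hvAB | hvS
    · have main : ∀ (X : Finset V), v ∈ X → 3 * X.card ≤ 2 * U.card →
          (∀ v' ∈ X, ∃ T : Finset V, v' ∈ T ∧
            (∀ u ∈ T, ∀ w, M.Adj u w → r u < r w → w ∈ T ∪ (S ∪ W)) ∧
            ((T.card : ℝ) ≤ c / (1 - (2/3 : ℝ) ^ α) * (X.card : ℝ) ^ α)) →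
          ∃ T : Finset V, v ∈ T ∧
            (∀ u ∈ T, ∀ w, M.Adj u w → r u < r w → w ∈ T ∪ W) ∧
            ((T.card : ℝ) ≤ c / (1 - (2/3 : ℝ) ^ α) * (U.card : ℝ) ^ α) := by
        intro X hvX h3X ih
        obtain ⟨T', hvT', hcl', hcard'⟩ := ih v hvX
        refine ⟨S ∪ T', Finset.mem_union_right _ hvT', ?_, ?_⟩
        · intro u hu w hadj hr
          rcases Finset.mem_union.mp hu with huS | huT'
          · rcases Finset.mem_union.mp (hSclosed u huS w hadj hr) with h | h
            · exact Finset.mem_union_left _ (Finset.mem_union_left _ h)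
            · exact Finset.mem_union_right _ h
          · rcases Finset.mem_union.mp (hcl' u huT' w hadj hr) with h | h
            · exact Finset.mem_union_left _ (Finset.mem_union_right _ h)
            · rcases Finset.mem_union.mp h with h | h
              · exact Finset.mem_union_left _ (Finset.mem_union_left _ h)
              · exact Finset.mem_union_right _ h
        · calc ((S ∪ T').card : ℝ) ≤ (S.card : ℝ) + (T'.card : ℝ) := by
                exact_mod_cast Finset.card_union_le S T'
            _ ≤ c * (U.card : ℝ) ^ α + c / (1 - (2/3 : ℝ) ^ α) * (X.card : ℝ) ^ α :=
                add_le_add hScard hcard'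
            _ ≤ c / (1 - (2/3 : ℝ) ^ α) * (U.card : ℝ) ^ α := by
                apply key_ineq hc hα0 (by positivity) (by positivity)
                exact_mod_cast h3X
      rcases Finset.mem_union.mp hvAB with hvA | hvB
      · exact main A hvA h3A ihA
      · exact main B hvB h3B ihB
    · exact ⟨S, hvS, hSclosed, hScard.trans (key_ineq2 hc hα0 (by positivity))⟩

lemma ndo_toFinset {G : SimpleGraph V} {c α : ℝ} :
    ∀ {U : Finset V} {l : List V}, IsNDOrder G c α U l → l.toFinset = U := by
  intro U l h
  induction h with
  | empty => simp
  | @step U S A B lA lB lS _ _ _ hABS _ _ _ _ _ hS _ _ ihA ihB =>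
    rw [← hABS]
    simp [List.toFinset_append, ihA, ihB, hS, Finset.union_assoc]

/-- The master lemma about contracting a nested dissection order. -/
lemma main_ch {G : SimpleGraph V} {c α : ℝ} :
    ∀ {U : Finset V} {l : List V}, IsNDOrder G c α U l →
    ∀ (H : SimpleGraph V) (W : Finset V) (r : V → ℕ),
    Disjoint U W →
    (∀ a b, H.Adj a b → a ∈ U → b ∈ U ∪ W) →
    (∀ a b, H.Adj a b → a ∈ U → b ∈ U → G.Adj a b) →
    List.Pairwise (fun a b => r a < r b) l →
    (∀ a b, (chList H l).Adj a b → a ∈ U → b ∈ U ∪ W) ∧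
    (∀ a b, (chList H l).Adj a b → H.Adj a b ∨ (a ∈ U ∪ W ∧ b ∈ U ∪ W)) ∧
    (∀ a b, (chRun H l).Adj a b → a ∉ U ∧ b ∉ U ∧ (H.Adj a b ∨ (a ∈ W ∧ b ∈ W))) ∧
    (∀ M : SimpleGraph V, (∀ a b, M.Adj a b → a ∈ U ∨ b ∈ U → (chList H l).Adj a b) →
      Good c α M r U W) := by
  intro U l d
  induction d with
  | empty =>
    intro H W r _ _ _ _
    exact ⟨fun a b _ ha => absurd ha (Finset.notMem_empty a),
      fun a b h => Or.inl h,
      fun a b h => ⟨Finset.notMem_empty a, Finset.notMem_empty b, Or.inl h⟩,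
      fun M _ => Good.empty W⟩
  | @step U S A B lA lB lS hdAB hdAS hdBS hABS hGAB h3A h3B hScard hSnodup hSto dA dB ihA ihB =>
    intro H W r hUW h1 h2 h3
    have hAU : A ⊆ U := hABS ▸ (Finset.subset_union_left.trans Finset.subset_union_left)
    have hBU : B ⊆ U := hABS ▸ (Finset.subset_union_right.trans Finset.subset_union_left)
    have hSU : S ⊆ U := hABS ▸ Finset.subset_union_right
    have hAto : lA.toFinset = A := ndo_toFinset dA
    have hBto : lB.toFinset = B := ndo_toFinset dB
    rw [List.pairwise_append] at h3
    obtain ⟨h3AB, h3S, hcross⟩ := h3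
    rw [List.pairwise_append] at h3AB
    obtain ⟨h3A', h3B', hcrossAB⟩ := h3AB
    have hAW : Disjoint A W := hUW.mono_left hAU
    have hBW : Disjoint B W := hUW.mono_left hBU
    have hSW : Disjoint S W := hUW.mono_left hSU
    have hdisjA : Disjoint A (S ∪ W) := Finset.disjoint_union_right.mpr ⟨hdAS, hAW⟩
    have hdisjB : Disjoint B (S ∪ W) := Finset.disjoint_union_right.mpr ⟨hdBS, hBW⟩
    have hmemU : ∀ {x : V}, x ∈ U → x ∈ A ∨ x ∈ B ∨ x ∈ S := by
      intro x hx
      rw [← hABS] at hx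
      rcases Finset.mem_union.mp hx with h | h
      · rcases Finset.mem_union.mp h with h | h
        · exact Or.inl h
        · exact Or.inr (Or.inl h)
      · exact Or.inr (Or.inr h)
    have hSUW : ∀ {x : V}, x ∈ S ∪ W → x ∈ U ∪ W := by
      intro x hx
      rcases Finset.mem_union.mp hx with h | h
      · exact Finset.mem_union_left _ (hSU h)
      · exact Finset.mem_union_right _ h
    -- phase A
    have h1A : ∀ a b, H.Adj a b → a ∈ A → b ∈ A ∪ (S ∪ W) := by
      intro a b hab ha
      rcases Finset.mem_union.mp (h1 a b hab (hAU ha)) with hbU | hbW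
      · rcases hmemU hbU with h | h | h
        · exact Finset.mem_union_left _ h
        · exact absurd (h2 a b hab (hAU ha) (hBU h)) (hGAB a ha b h)
        · exact Finset.mem_union_right _ (Finset.mem_union_left _ h)
      · exact Finset.mem_union_right _ (Finset.mem_union_right _ hbW)
    have h2A : ∀ a b, H.Adj a b → a ∈ A → b ∈ A → G.Adj a b :=
      fun a b hab ha hb => h2 a b hab (hAU ha) (hAU hb)
    obtain ⟨C1A, C1'A, C2A, C3A⟩ := ihA H (S ∪ W) r hdisjA h1A h2A h3A'
    set H₁ := chRun H lA with hH₁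
    have hH1toH : ∀ a b, H₁.Adj a b → H.Adj a b ∨ (a ∈ S ∪ W ∧ b ∈ S ∪ W) :=
      fun a b h => (C2A a b h).2.2
    -- phase B
    have h1B : ∀ a b, H₁.Adj a b → a ∈ B → b ∈ B ∪ (S ∪ W) := by
      intro a b hab ha
      obtain ⟨haA, hbA, hcl⟩ := C2A a b hab
      rcases hcl with hH | ⟨haSW, _⟩
      · rcases Finset.mem_union.mp (h1 a b hH (hBU ha)) with hbU | hbW
        · rcases hmemU hbU with h | h | h
          · exact absurd h hbA
          · exact Finset.mem_union_left _ h
          · exact Finset.mem_union_right _ (Finset.mem_union_left _ h)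
        · exact Finset.mem_union_right _ (Finset.mem_union_right _ hbW)
      · exact absurd haSW (Finset.disjoint_left.mp hdisjB ha)
    have h2B : ∀ a b, H₁.Adj a b → a ∈ B → b ∈ B → G.Adj a b := by
      intro a b hab ha hb
      obtain ⟨_, _, hcl⟩ := C2A a b hab
      rcases hcl with hH | ⟨haSW, _⟩
      · exact h2 a b hH (hBU ha) (hBU hb)
      · exact absurd haSW (Finset.disjoint_left.mp hdisjB ha)
    obtain ⟨C1B, C1'B, C2B, C3B⟩ := ihB H₁ (S ∪ W) r hdisjB h1B h2B h3B'
    set H₂ := chRun H₁ lB with hH₂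
    have hH2toH1 : ∀ a b, H₂.Adj a b → H₁.Adj a b ∨ (a ∈ S ∪ W ∧ b ∈ S ∪ W) :=
      fun a b h => (C2B a b h).2.2
    have hH2toH : ∀ a b, H₂.Adj a b → H.Adj a b ∨ (a ∈ S ∪ W ∧ b ∈ S ∪ W) := by
      intro a b h
      rcases hH2toH1 a b h with h | h
      · exact hH1toH a b h
      · exact Or.inr h
    -- phase S
    have hlSS : ∀ v ∈ lS, v ∈ S := fun v hv => hSto ▸ List.mem_toFinset.mpr hv
    have hH2S : ∀ a b, H₂.Adj a b → a ∈ S → b ∈ S ∪ W := by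
      intro a b hab ha
      obtain ⟨haB, hbB, h21⟩ := C2B a b hab
      rcases h21 with h1adj | ⟨_, hb⟩
      · obtain ⟨haA, hbA, hHc⟩ := C2A a b h1adj
        rcases hHc with hH | ⟨_, hb⟩
        · rcases Finset.mem_union.mp (h1 a b hH (hSU ha)) with hbU | hbW
          · rcases hmemU hbU with h | h | h
            · exact absurd h hbA
            · exact absurd h hbB
            · exact Finset.mem_union_left _ h
          · exact Finset.mem_union_right _ hbW
        · exact hb
      · exact hb
    obtain ⟨F1, F2⟩ := phaseS lS H₂ hlSS hH2S
    set H₃ := chRun H₂ lS with hH₃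
    -- decomposition of chList/chRun
    have hrun : chRun H (lA ++ lB ++ lS) = H₃ := by
      rw [chRun_append, chRun_append]
    have hdecomp : chList H (lA ++ lB ++ lS)
        = chList H lA ⊔ (chList H₁ lB ⊔ chList H₂ lS) := by
      rw [chList_append, chList_append, chRun_append, sup_assoc]
    have hclass : ∀ a b, (chList H (lA ++ lB ++ lS)).Adj a b →
        (chList H lA).Adj a b ∨ (chList H₁ lB).Adj a b ∨ (chList H₂ lS).Adj a b := by
      intro a b h
      rw [hdecomp] at h
      simpa only [SimpleGraph.sup_adj] using h
    -- classification to H plus U∪W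
    have hC1' : ∀ a b, (chList H (lA ++ lB ++ lS)).Adj a b →
        H.Adj a b ∨ (a ∈ U ∪ W ∧ b ∈ U ∪ W) := by
      intro a b h
      have hAUW : ∀ {x : V}, x ∈ A ∪ (S ∪ W) → x ∈ U ∪ W := by
        intro x hx
        rcases Finset.mem_union.mp hx with h' | h'
        · exact Finset.mem_union_left _ (hAU h')
        · exact hSUW h'
      have hBUW : ∀ {x : V}, x ∈ B ∪ (S ∪ W) → x ∈ U ∪ W := by
        intro x hx
        rcases Finset.mem_union.mp hx with h' | h'
        · exact Finset.mem_union_left _ (hBU h')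
        · exact hSUW h'
      rcases hclass a b h with h | h | h
      · rcases C1'A a b h with h | hab
        · exact Or.inl h
        · exact Or.inr ⟨hAUW hab.1, hAUW hab.2⟩
      · rcases C1'B a b h with h | hab
        · rcases hH1toH a b h with h | hab
          · exact Or.inl h
          · exact Or.inr ⟨hSUW hab.1, hSUW hab.2⟩
        · exact Or.inr ⟨hBUW hab.1, hBUW hab.2⟩
      · rcases F1 a b h with h | hab
        · rcases hH2toH a b h with h | hab
          · exact Or.inl h
          · exact Or.inr ⟨hSUW hab.1, hSUW hab.2⟩
        · exact Or.inr ⟨hSUW hab.1, hSUW hab.2⟩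
    have hC1 : ∀ a b, (chList H (lA ++ lB ++ lS)).Adj a b → a ∈ U → b ∈ U ∪ W := by
      intro a b h ha
      rcases hC1' a b h with h | hab
      · exact h1 a b h ha
      · exact hab.2
    -- final state
    have hisoU : ∀ a ∈ U, ∀ b, ¬ H₃.Adj a b := by
      intro a ha b
      rcases hmemU ha with h | h | h
      · have h1iso : ∀ b, ¬ H₁.Adj a b := fun b hb => (C2A a b hb).1 h
        exact isolated_chRun (isolated_chRun h1iso lB) lS b
      · have h2iso : ∀ b, ¬ H₂.Adj a b := fun b hb => (C2B a b hb).1 h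
        exact isolated_chRun h2iso lS b
      · exact chRun_isolated_of_mem (by rw [← hSto] at h; exact List.mem_toFinset.mp h) H₂ b
    have hC2 : ∀ a b, (chRun H (lA ++ lB ++ lS)).Adj a b →
        a ∉ U ∧ b ∉ U ∧ (H.Adj a b ∨ (a ∈ W ∧ b ∈ W)) := by
      intro a b h
      rw [hrun] at h
      have haU : a ∉ U := fun ha => hisoU a ha b h
      have hbU : b ∉ U := fun hb => hisoU b hb a h.symm
      refine ⟨haU, hbU, ?_⟩
      have hSW' : ∀ {x : V}, x ∉ U → x ∈ S ∪ W → x ∈ W := by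
        intro x hx hxSW
        rcases Finset.mem_union.mp hxSW with h' | h'
        · exact absurd (hSU h') hx
        · exact h'
      rcases F2 a b h with h' | hab
      · rcases hH2toH a b h' with h'' | hab
        · exact Or.inl h''
        · exact Or.inr ⟨hSW' haU hab.1, hSW' hbU hab.2⟩
      · exact Or.inr ⟨hSW' haU hab.1, hSW' hbU hab.2⟩
    refine ⟨hC1, hC1', hC2, ?_⟩
    -- Goodness
    intro M hM
    have hMedge : ∀ a b, M.Adj a b → a ∈ U → b ∈ U ∪ W := by
      intro a b h ha
      exact hC1 a b (hM a b h (Or.inl ha)) ha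
    have hrank : ∀ x, (x ∈ A ∨ x ∈ B) → ∀ s ∈ S, r x < r s := by
      intro x hx s hs
      have hxl : x ∈ lA ++ lB := by
        rcases hx with hx | hx
        · exact List.mem_append_left _ (List.mem_toFinset.mp (hAto ▸ hx))
        · exact List.mem_append_right _ (List.mem_toFinset.mp (hBto ▸ hx))
      exact hcross x hxl s (by rw [← hSto] at hs; exact List.mem_toFinset.mp hs)
    have hgoodA : Good c α M r A (S ∪ W) := by
      apply C3A M
      intro a b h hab
      have hU : a ∈ U ∨ b ∈ U := by
        rcases hab with h' | h'
        · exact Or.inl (hAU h')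
        · exact Or.inr (hAU h')
      have hdj : ∀ {x : V}, x ∈ A → x ∉ B ∪ (S ∪ W) := by
        intro x hx hx'
        rcases Finset.mem_union.mp hx' with h' | h'
        · exact Finset.disjoint_left.mp hdAB hx h'
        · exact Finset.disjoint_left.mp hdisjA hx h'
      have hdjS : ∀ {x : V}, x ∈ A → x ∉ S ∪ W := fun hx hx' =>
        Finset.disjoint_left.mp hdisjA hx hx'
      rcases hclass a b (hM a b h hU) with h' | h' | h'
      · exact h'
      · exfalso
        rcases C1'B a b h' with h'' | hab'
        · obtain ⟨haA, hbA, _⟩ := C2A a b h''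
          rcases hab with hx | hx
          · exact haA hx
          · exact hbA hx
        · rcases hab with hx | hx
          · exact hdj hx hab'.1
          · exact hdj hx hab'.2
      · exfalso
        rcases F1 a b h' with h'' | hab'
        · rcases hH2toH1 a b h'' with h3' | hab''
          · obtain ⟨haA, hbA, _⟩ := C2A a b h3'
            rcases hab with hx | hx
            · exact haA hx
            · exact hbA hx
          · rcases hab with hx | hx
            · exact hdjS hx hab''.1
            · exact hdjS hx hab''.2
        · rcases hab with hx | hx
          · exact hdjS hx hab'.1
          · exact hdjS hx hab'.2
    have hgoodB : Good c α M r B (S ∪ W) := by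
      apply C3B M
      intro a b h hab
      have hU : a ∈ U ∨ b ∈ U := by
        rcases hab with h' | h'
        · exact Or.inl (hBU h')
        · exact Or.inr (hBU h')
      have hdjB : ∀ {x : V}, x ∈ B → x ∉ S ∪ W := fun hx hx' =>
        Finset.disjoint_left.mp hdisjB hx hx'
      have hdjBA : ∀ {x : V}, x ∈ B → x ∉ A ∪ (S ∪ W) := by
        intro x hx hx'
        rcases Finset.mem_union.mp hx' with h' | h'
        · exact Finset.disjoint_left.mp hdAB.symm hx h'
        · exact hdjB hx h'
      have hsurv : H.Adj a b → (a ∈ B ∨ b ∈ B) → H₁.Adj a b := by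
        intro hH hab'
        have hnotA : a ∉ A ∧ b ∉ A := by
          rcases hab' with hx | hx
          · refine ⟨Finset.disjoint_left.mp hdAB.symm hx, ?_⟩
            intro hbA
            exact hGAB b hbA a hx (h2 a b hH (hBU hx) (hAU hbA)).symm
          · refine ⟨?_, Finset.disjoint_left.mp hdAB.symm hx⟩
            intro haA
            exact hGAB a haA b hx (h2 b a hH.symm (hBU hx) (hAU haA)).symm
        exact chRun_adj_of_notMem (fun hm => hnotA.1 (hAto ▸ List.mem_toFinset.mpr hm))
          (fun hm => hnotA.2 (hAto ▸ List.mem_toFinset.mpr hm)) hH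
      rcases hclass a b (hM a b h hU) with h' | h' | h'
      · rcases C1'A a b h' with h'' | hab'
        · exact le_chList H₁ lB (hsurv h'' hab)
        · exfalso
          rcases hab with hx | hx
          · exact hdjBA hx hab'.1
          · exact hdjBA hx hab'.2
      · exact h'
      · exfalso
        rcases F1 a b h' with h'' | hab'
        · obtain ⟨haB, hbB, _⟩ := C2B a b h''
          rcases hab with hx | hx
          · exact haB hx
          · exact hbB hx
        · rcases hab with hx | hx
          · exact hdjB hx hab'.1
          · exact hdjB hx hab'.2
    exact Good.step hABS h3A h3B hScard hMedge hrank hgoodA hgoodB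

end good

end CHAux

/-- If every induced subgraph of `G` on `k ≥ 1` vertices has a balanced
separator of cardinality at most `c * k ^ α`, and `π` is a nested dissection order of
`G` whose separator at every recursion step on a `k`-vertex subgraph has cardinality
at most `c * k ^ α`, then every search space `SS v` in `G^∧π` has at most
`(c / (1 - (2/3) ^ α)) * n ^ α` vertices. -/
theorem stmt3 {V : Type*} [Fintype V] [DecidableEq V] {n : ℕ}
    (G : SimpleGraph V) (hG : G.Connected) (π : Fin n ≃ V)
    (α c : ℝ) (hα0 : 0 < α) (hα1 : α < 1) (hc : 0 < c)
    (hsep : ∀ U : Finset V, U.Nonempty →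
      ∃ S : Finset V, IsBalancedSepOn G U S ∧ (S.card : ℝ) ≤ c * (U.card : ℝ) ^ α)
    (hnd : IsNDOrder G c α Finset.univ ((List.finRange n).map ⇑π)) :
    ∀ v : V, (nVertsSS G π v : ℝ) ≤ c / (1 - (2/3 : ℝ) ^ α) * (n : ℝ) ^ α := by
  intro v
  classical
  have hpw : List.Pairwise (fun a b => rk π a < rk π b) ((List.finRange n).map ⇑π) := by
    rw [List.pairwise_map]
    refine (List.pairwise_lt_finRange n).imp ?_
    intro i j hij
    simpa only [rk, Equiv.symm_apply_apply] using (Fin.lt_def.mp hij)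
  obtain ⟨C1, C1', C2, C3⟩ := CHAux.main_ch hnd G ∅ (rk π)
    (Finset.disjoint_empty_right _)
    (fun a b _ _ => Finset.mem_union_left _ (Finset.mem_univ b))
    (fun a b h _ _ => h) hpw
  have hGood : CHAux.Good c α (chGraph G π) (rk π) Finset.univ ∅ :=
    C3 (chGraph G π) (fun a b h _ => h)
  obtain ⟨T, hvT, hcl, hcard⟩ := CHAux.good_bound hc hα0 hGood v (Finset.mem_univ v)
  have hsub : {u | UpReach G π v u} ⊆ (T : Set V) := by
    intro u hu
    induction hu with
    | refl => exact hvT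
    | tail _ hstep ih =>
      have := hcl _ ih _ hstep.1 hstep.2
      simpa using this
  have hle : nVertsSS G π v ≤ T.card := by
    have h := Set.ncard_le_ncard hsub (T.finite_toSet)
    simpa [nVertsSS, Set.ncard_coe_finset] using h
  have hn : ((Finset.univ : Finset V).card : ℝ) = (n : ℝ) := by
    norm_cast
    rw [Finset.card_univ]
    exact (Fintype.card_congr π.symm).trans (Fintype.card_fin n)
  calc (nVertsSS G π v : ℝ) ≤ (T.card : ℝ) := by exact_mod_cast hle
    _ ≤ c / (1 - (2/3 : ℝ) ^ α) * ((Finset.univ : Finset V).card : ℝ) ^ α := hcard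
    _ = c / (1 - (2/3 : ℝ) ^ α) * (n : ℝ) ^ α := by rw [hn]
end
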